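/- For every natural number n ≥ 4 and every rectilinear drawing R of the complete graph K_n, the crossing number satisfies n(R(K_n)) ≥ 2·(n choose 4). -/
import Mathlib

set_option linter.unusedSectionVars false

/-!
Common definitions for the Orchard crossing number
(Feder–Garber, "The Orchard crossing number of an abstract graph").
-/

noncomputable section

/-- Points of the plane. -/
abbrev Pt : Type := ℝ × ℝ

/-- The line through two points of the plane. -/
def lineThrough (p q : Pt) : Set Pt := (affineSpan ℝ ({p, q} : Set Pt) : Set Pt)

/-- A line (or any set) `L` separates the points `P` and `Q` if both lie off `L`
and they lie in different connected components of the complement of `L`. -/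
def Separates (L : Set Pt) (P Q : Pt) : Prop :=
  P ∉ L ∧ Q ∉ L ∧ connectedComponentIn Lᶜ P ≠ connectedComponentIn Lᶜ Q

theorem Separates.symm {L : Set Pt} {P Q : Pt} (h : Separates L P Q) : Separates L Q P :=
  ⟨h.2.1, h.1, h.2.2.symm⟩

/-- A generic configuration: a finite set of points, no three of which are collinear. -/
def GenericConfig (S : Set Pt) : Prop :=
  S.Finite ∧ ∀ p ∈ S, ∀ q ∈ S, ∀ r ∈ S, p ≠ q → p ≠ r → q ≠ r →
    ¬ Collinear ℝ ({p, q, r} : Set Pt)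

/-- A finite set of points is in convex position if every point of it is an extreme
point of its convex hull, i.e. lies outside the convex hull of the other points. -/
def ConvexPosition (S : Set Pt) : Prop :=
  ∀ p ∈ S, p ∉ convexHull ℝ (S \ {p})

variable {V : Type*} [Fintype V] [DecidableEq V]

/-- A rectilinear drawing of a graph on vertex set `V`: an injective placement of the
vertices in the plane whose image is a generic configuration. -/
def IsRectDrawing (f : V → Pt) : Prop :=
  Function.Injective f ∧ GenericConfig (Set.range f)

/-- `sepCount f s t` is `n(s,t)`: the number of (unordered) pairs of vertices, both
different from `s` and `t`, whose drawn points span a line separating `f s` from `f t`. -/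
def sepCount (f : V → Pt) (s t : V) : ℕ :=
  Set.ncard {e : Finset V | ∃ a b : V, e = {a, b} ∧ a ≠ b ∧ s ∉ e ∧ t ∉ e ∧
    Separates (lineThrough (f a) (f b)) (f s) (f t)}

theorem sepCount_symm (f : V → Pt) (s t : V) : sepCount f s t = sepCount f t s := by
  unfold sepCount
  congr 1
  ext e
  constructor
  · rintro ⟨a, b, rfl, hab, hs, ht, hsep⟩
    exact ⟨a, b, rfl, hab, ht, hs, hsep.symm⟩
  · rintro ⟨a, b, rfl, hab, ht, hs, hsep⟩
    exact ⟨a, b, rfl, hab, hs, ht, hsep.symm⟩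

/-- The crossing number `n(R(G))` of a drawing: the sum of `n(s,t)` over all edges. -/
def drawingCrossings (G : SimpleGraph V) (f : V → Pt) : ℕ :=
  ∑ e ∈ G.edgeSet.toFinite.toFinset,
    Sym2.lift ⟨fun s t => sepCount f s t, fun s t => sepCount_symm f s t⟩ e

/-- The Orchard crossing number: the minimum of `n(R(G))` over all rectilinear drawings. -/
def OCN (G : SimpleGraph V) : ℕ :=
  sInf {n | ∃ f : V → Pt, IsRectDrawing f ∧ drawingCrossings G f = n}

/-- The maximal Orchard crossing number: the maximum of `n(R(G))` over all drawings. -/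
def MOCN (G : SimpleGraph V) : ℕ :=
  sSup {n | ∃ f : V → Pt, IsRectDrawing f ∧ drawingCrossings G f = n}

/-- The open segment drawn for an edge. -/
def edgeSeg (f : V → Pt) (e : Sym2 V) : Set Pt :=
  Sym2.lift ⟨fun a b => openSegment ℝ (f a) (f b), fun a b => openSegment_symm ℝ (f a) (f b)⟩ e

/-- The number of unordered pairs of distinct edges of `G` whose drawn open segments
intersect. -/
def crossPairs (G : SimpleGraph V) (f : V → Pt) : ℕ :=
  Set.ncard {p : Finset (Sym2 V) | ∃ e₁ e₂ : Sym2 V, p = {e₁, e₂} ∧ e₁ ≠ e₂ ∧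
    e₁ ∈ G.edgeSet ∧ e₂ ∈ G.edgeSet ∧ (edgeSeg f e₁ ∩ edgeSeg f e₂).Nonempty}

/-- The rectilinear crossing number: the minimum number of crossing pairs of edges
over all rectilinear drawings. -/
def rcr (G : SimpleGraph V) : ℕ :=
  sInf {n | ∃ f : V → Pt, IsRectDrawing f ∧ crossPairs G f = n}

/-- The number of 4-element subsets of the drawn points which are in convex position. -/
def convexFour (f : V → Pt) : ℕ :=
  Set.ncard {Q : Finset Pt | Q.card = 4 ∧ (Q : Set Pt) ⊆ Set.range f ∧
    ConvexPosition (Q : Set Pt)}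

/-- The cyclic successor on `Fin n`. -/
def nextFin {n : ℕ} (i : Fin n) : Fin n :=
  ⟨(i.val + 1) % n, Nat.mod_lt _ (Nat.zero_lt_of_lt i.isLt)⟩

/-- The star graph `K_{n,1}` on `n+1` vertices: the center `0` is joined to each of
the `n` outer vertices. -/
def starGraph (n : ℕ) : SimpleGraph (Fin (n + 1)) :=
  SimpleGraph.fromEdgeSet {e | ∃ i : Fin n, e = s((0 : Fin (n + 1)), i.succ)}

/-- The wheel graph `W_{n,1}` on `n+1` vertices: a cycle on the `n` outer vertices
together with a hub `0` joined to each of them. -/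
def wheelGraph (n : ℕ) : SimpleGraph (Fin (n + 1)) :=
  SimpleGraph.fromEdgeSet
    ({e | ∃ i : Fin n, e = s((0 : Fin (n + 1)), i.succ)} ∪
     {e | ∃ i : Fin n, e = s(i.succ, (nextFin i).succ)})

/-- The cycle graph `C_n` on the outer vertices `1, …, n` of `Fin (n+1)`, together
with the isolated vertex `0`. -/
def cycleWithIsolated (n : ℕ) : SimpleGraph (Fin (n + 1)) :=
  SimpleGraph.fromEdgeSet {e | ∃ i : Fin n, e = s(i.succ, (nextFin i).succ)}

/-- `HullCycle f` says that for every `i`, all the other drawn points lie (strictly) on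
one side of the line through `f i` and `f (i+1)`; for an injective generic placement this
means the points are in convex position and occur around the convex hull exactly in the
cyclic order `f 0, f 1, …`. -/
def HullCycle {m : ℕ} (f : Fin m → Pt) : Prop :=
  ∀ i j l : Fin m, j ≠ i → j ≠ nextFin i → l ≠ i → l ≠ nextFin i →
    ¬ Separates (lineThrough (f i) (f (nextFin i))) (f j) (f l)

end

namespace OCNaux

/-- Orientation determinant of three points of the plane. -/
noncomputable def Dd (u v w : Pt) : ℝ :=
  (v.1 - u.1) * (w.2 - u.2) - (v.2 - u.2) * (w.1 - u.1)

lemma Dd_cyc (u v w : Pt) : Dd u v w = Dd w u v := by unfold Dd; ring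

lemma Dd_swap (u v w : Pt) : Dd u v w = - Dd u w v := by unfold Dd; ring

lemma mem_lineThrough_iff {u v x : Pt} (huv : u ≠ v) :
    x ∈ lineThrough u v ↔ Dd u v x = 0 := by
  have h1 : x ∈ lineThrough u v ↔ ∃ r : ℝ, r • (v -ᵥ u) = x -ᵥ u := by
    unfold lineThrough
    rw [SetLike.mem_coe]
    conv_lhs => rw [← vsub_vadd x u]
    exact vadd_left_mem_affineSpan_pair
  rw [h1]
  constructor
  · rintro ⟨r, hr⟩
    have h1 : r * (v.1 - u.1) = x.1 - u.1 := congrArg Prod.fst hr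
    have h2 : r * (v.2 - u.2) = x.2 - u.2 := congrArg Prod.snd hr
    unfold Dd
    linear_combination (v.2 - u.2) * h1 - (v.1 - u.1) * h2
  · intro hD
    unfold Dd at hD
    by_cases hc : v.1 - u.1 = 0
    · have hc2 : v.2 - u.2 ≠ 0 := by
        intro h2
        apply huv
        have e1 : u.1 = v.1 := by linarith
        have e2 : u.2 = v.2 := by linarith
        exact Prod.ext e1 e2
      have hx1 : x.1 - u.1 = 0 := by
        have hz : (v.2 - u.2) * (x.1 - u.1) = 0 := by
          rw [hc] at hD; linarith
        rcases mul_eq_zero.1 hz with h' | h'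
        · exact absurd h' hc2
        · exact h'
      refine ⟨(x.2 - u.2) / (v.2 - u.2), Prod.ext ?_ ?_⟩
      · show (x.2 - u.2) / (v.2 - u.2) * (v.1 - u.1) = x.1 - u.1
        rw [hc, hx1, mul_zero]
      · show (x.2 - u.2) / (v.2 - u.2) * (v.2 - u.2) = x.2 - u.2
        field_simp
    · refine ⟨(x.1 - u.1) / (v.1 - u.1), Prod.ext ?_ ?_⟩
      · show (x.1 - u.1) / (v.1 - u.1) * (v.1 - u.1) = x.1 - u.1
        field_simp
      · show (x.1 - u.1) / (v.1 - u.1) * (v.2 - u.2) = x.2 - u.2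
        have hc' : v.1 - u.1 ≠ 0 := hc
        field_simp
        linear_combination -hD

lemma collinear_of_Dd_eq {u v w : Pt} (h : Dd u v w = 0) :
    Collinear ℝ ({u, v, w} : Set Pt) := by
  by_cases huv : u = v
  · subst huv
    have : ({u, u, w} : Set Pt) = {u, w} := by simp
    rw [this]
    exact collinear_pair ℝ u w
  · have hw : w ∈ line[ℝ, u, v] := by
      have := (mem_lineThrough_iff huv).2 h
      unfold lineThrough at this
      rwa [SetLike.mem_coe] at this
    have := collinear_insert_of_mem_affineSpan_pair hw
    refine this.subset ?_
    intro x hx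
    simp only [Set.mem_insert_iff, Set.mem_singleton_iff] at hx ⊢
    tauto

lemma Dd_ne_of_notCollinear {u v w : Pt} (h : ¬ Collinear ℝ ({u, v, w} : Set Pt)) :
    Dd u v w ≠ 0 := fun h0 => h (collinear_of_Dd_eq h0)

lemma separates_of {u v P Q : Pt} (huv : u ≠ v) (h : Dd u v P * Dd u v Q < 0) :
    Separates (lineThrough u v) P Q := by
  have hP : Dd u v P ≠ 0 := by intro h0; rw [h0] at h; simp at h
  have hQ : Dd u v Q ≠ 0 := by intro h0; rw [h0] at h; simp at h
  set L := lineThrough u v with hL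
  have hPc : P ∈ Lᶜ := fun hm => hP ((mem_lineThrough_iff huv).1 hm)
  have hQc : Q ∈ Lᶜ := fun hm => hQ ((mem_lineThrough_iff huv).1 hm)
  refine ⟨hPc, hQc, ?_⟩
  intro heq
  have hQmem : Q ∈ connectedComponentIn Lᶜ P := heq ▸ mem_connectedComponentIn hQc
  have hPmem : P ∈ connectedComponentIn Lᶜ P := mem_connectedComponentIn hPc
  have hpre : IsPreconnected (connectedComponentIn Lᶜ P) := isPreconnected_connectedComponentIn
  have hcont : Continuous (fun x : Pt => Dd u v x) := by unfold Dd; fun_prop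
  have himg : IsPreconnected ((fun x : Pt => Dd u v x) '' connectedComponentIn Lᶜ P) :=
    hpre.image _ hcont.continuousOn
  have hord := himg.ordConnected
  have h0 : (0 : ℝ) ∈ (fun x : Pt => Dd u v x) '' connectedComponentIn Lᶜ P := by
    rcases lt_or_gt_of_ne hP with hPn | hPn
    · have hQp : 0 < Dd u v Q := by nlinarith
      exact hord.out (Set.mem_image_of_mem _ hPmem) (Set.mem_image_of_mem _ hQmem)
        ⟨le_of_lt hPn, le_of_lt hQp⟩
    · have hQp : Dd u v Q < 0 := by nlinarith
      exact hord.out (Set.mem_image_of_mem _ hQmem) (Set.mem_image_of_mem _ hPmem)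
        ⟨le_of_lt hQp, le_of_lt hPn⟩
  obtain ⟨x, hx, hx0⟩ := h0
  exact (connectedComponentIn_subset _ _ hx) ((mem_lineThrough_iff huv).2 hx0)

end OCNaux

namespace OCNaux

def cnd6 (x1 x2 x3 x4 : ℝ) (i : Fin 6) : Prop :=
  if i.val = 0 then x3 * x4 < 0 else if i.val = 1 then x1 * x2 < 0
  else if i.val = 2 then 0 < x2 * x4 else if i.val = 3 then 0 < x1 * x3
  else if i.val = 4 then x2 * x3 < 0 else x1 * x4 < 0

lemma cnd6_0 {x1 x2 x3 x4 : ℝ} : cnd6 x1 x2 x3 x4 0 ↔ x3 * x4 < 0 := by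
  norm_num [cnd6, show ((0 : Fin 6)).val = 0 from rfl]
lemma cnd6_1 {x1 x2 x3 x4 : ℝ} : cnd6 x1 x2 x3 x4 1 ↔ x1 * x2 < 0 := by
  norm_num [cnd6, show ((1 : Fin 6)).val = 1 from rfl]
lemma cnd6_2 {x1 x2 x3 x4 : ℝ} : cnd6 x1 x2 x3 x4 2 ↔ 0 < x2 * x4 := by
  norm_num [cnd6, show ((2 : Fin 6)).val = 2 from rfl]
lemma cnd6_3 {x1 x2 x3 x4 : ℝ} : cnd6 x1 x2 x3 x4 3 ↔ 0 < x1 * x3 := by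
  norm_num [cnd6, show ((3 : Fin 6)).val = 3 from rfl]
lemma cnd6_4 {x1 x2 x3 x4 : ℝ} : cnd6 x1 x2 x3 x4 4 ↔ x2 * x3 < 0 := by
  norm_num [cnd6, show ((4 : Fin 6)).val = 4 from rfl]
lemma cnd6_5 {x1 x2 x3 x4 : ℝ} : cnd6 x1 x2 x3 x4 5 ↔ x1 * x4 < 0 := by
  norm_num [cnd6, show ((5 : Fin 6)).val = 5 from rfl]

lemma six {x1 x2 x3 x4 : ℝ} (h1 : x1 ≠ 0) (h2 : x2 ≠ 0) (h3 : x3 ≠ 0) (h4 : x4 ≠ 0) :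
    ∃ i j : Fin 6, i ≠ j ∧ cnd6 x1 x2 x3 x4 i ∧ cnd6 x1 x2 x3 x4 j := by
  rcases lt_or_gt_of_ne h1 with h1 | h1 <;>
  rcases lt_or_gt_of_ne h2 with h2 | h2 <;>
  rcases lt_or_gt_of_ne h3 with h3 | h3 <;>
  rcases lt_or_gt_of_ne h4 with h4 | h4 <;>
  first
  | exact ⟨2, 3, by decide, cnd6_2.2 (by nlinarith), cnd6_3.2 (by nlinarith)⟩
  | exact ⟨0, 5, by decide, cnd6_0.2 (by nlinarith), cnd6_5.2 (by nlinarith)⟩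
  | exact ⟨0, 4, by decide, cnd6_0.2 (by nlinarith), cnd6_4.2 (by nlinarith)⟩
  | exact ⟨4, 5, by decide, cnd6_4.2 (by nlinarith), cnd6_5.2 (by nlinarith)⟩
  | exact ⟨1, 4, by decide, cnd6_1.2 (by nlinarith), cnd6_4.2 (by nlinarith)⟩
  | exact ⟨0, 1, by decide, cnd6_0.2 (by nlinarith), cnd6_1.2 (by nlinarith)⟩
  | exact ⟨1, 5, by decide, cnd6_1.2 (by nlinarith), cnd6_5.2 (by nlinarith)⟩

end OCNaux

namespace OCNaux

variable {V : Type*} [Fintype V] [DecidableEq V]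

/-- The set counted by `sepCount`, as a function of the unordered edge. -/
def sepSet (f : V → Pt) (e : Sym2 V) : Set (Finset V) :=
  Sym2.lift ⟨fun s t => {p : Finset V | ∃ a b : V, p = {a, b} ∧ a ≠ b ∧ s ∉ p ∧ t ∉ p ∧
      Separates (lineThrough (f a) (f b)) (f s) (f t)},
    by
      intro s t
      ext p
      constructor <;> rintro ⟨a, b, rfl, hab, h1, h2, hsep⟩ <;>
        exact ⟨a, b, rfl, hab, h2, h1, hsep.symm⟩⟩ e

lemma lift_sepCount (f : V → Pt) (e : Sym2 V) :
    Sym2.lift ⟨fun s t => sepCount f s t, fun s t => sepCount_symm f s t⟩ e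
      = (sepSet f e).ncard := by
  induction e using Sym2.ind with
  | _ s t => simp only [Sym2.lift_mk, sepSet, sepCount]

/-- The four-element vertex set associated to a (edge, pair) combination. -/
def qmap (x : (_ : Sym2 V) × Finset V) : Finset V :=
  Sym2.lift ⟨fun s t => insert s (insert t x.2),
    fun s t => Finset.insert_comm s t x.2⟩ x.1

lemma card_four {s : Finset V} (h : s.card = 4) :
    ∃ a b c d : V, a ≠ b ∧ a ≠ c ∧ a ≠ d ∧ b ≠ c ∧ b ≠ d ∧ c ≠ d ∧ s = {a, b, c, d} := by
  rw [show (4 : ℕ) = 3 + 1 from rfl, Finset.card_eq_succ] at h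
  obtain ⟨a, t, hat, rfl, ht⟩ := h
  obtain ⟨b, c, d, hbc, hbd, hcd, rfl⟩ := Finset.card_eq_three.1 ht
  refine ⟨a, b, c, d, ?_, ?_, ?_, hbc, hbd, hcd, rfl⟩ <;>
    · rintro rfl; simp at hat

lemma pair_ne_l {x y z w : V} (h1 : x ≠ z) (h2 : x ≠ w) :
    ({x, y} : Finset V) ≠ {z, w} := by
  intro h
  have hx : x ∈ ({z, w} : Finset V) := h ▸ Finset.mem_insert_self x {y}
  simp [h1, h2] at hx

lemma pair_ne_r {x y z w : V} (h1 : y ≠ z) (h2 : y ≠ w) :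
    ({x, y} : Finset V) ≠ {z, w} := by
  intro h
  have hx : y ∈ ({z, w} : Finset V) := h ▸ (by simp : y ∈ ({x, y} : Finset V))
  simp [h1, h2] at hx

lemma two_le_card_of {α : Type*} {s : Finset α} {x y : α} (hx : x ∈ s) (hy : y ∈ s)
    (hxy : x ≠ y) : 2 ≤ s.card :=
  Finset.one_lt_card.2 ⟨x, hx, y, hy, hxy⟩

lemma qeq0 (a b c d : V) : insert c (insert d ({a, b} : Finset V)) = {a, b, c, d} := by
  ext x; simp only [Finset.mem_insert, Finset.mem_singleton]; tauto
lemma qeq1 (a b c d : V) : insert a (insert b ({c, d} : Finset V)) = {a, b, c, d} := rfl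
lemma qeq2 (a b c d : V) : insert b (insert d ({a, c} : Finset V)) = {a, b, c, d} := by
  ext x; simp only [Finset.mem_insert, Finset.mem_singleton]; tauto
lemma qeq3 (a b c d : V) : insert a (insert c ({b, d} : Finset V)) = {a, b, c, d} := by
  ext x; simp only [Finset.mem_insert, Finset.mem_singleton]; tauto
lemma qeq4 (a b c d : V) : insert b (insert c ({a, d} : Finset V)) = {a, b, c, d} := by
  ext x; simp only [Finset.mem_insert, Finset.mem_singleton]; tauto
lemma qeq5 (a b c d : V) : insert a (insert d ({b, c} : Finset V)) = {a, b, c, d} := by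
  ext x; simp only [Finset.mem_insert, Finset.mem_singleton]; tauto

end OCNaux


open OCNaux in
set_option maxHeartbeats 1000000 in
theorem stmt_1 (n : ℕ) (hn : 4 ≤ n) (f : Fin n → Pt) (hf : IsRectDrawing f) :
    2 * Nat.choose n 4 ≤ drawingCrossings (⊤ : SimpleGraph (Fin n)) f := by
  classical
  obtain ⟨hinj, hfin, hgen⟩ := hf
  have notCol : ∀ i j k : Fin n, i ≠ j → i ≠ k → j ≠ k →
      ¬ Collinear ℝ ({f i, f j, f k} : Set Pt) := fun i j k hij hik hjk =>
    hgen (f i) ⟨i, rfl⟩ (f j) ⟨j, rfl⟩ (f k) ⟨k, rfl⟩ (hinj.ne hij) (hinj.ne hik) (hinj.ne hjk)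
  simp only [drawingCrossings]
  set E : Finset (Sym2 (Fin n)) := (⊤ : SimpleGraph (Fin n)).edgeSet.toFinite.toFinset with hE
  set FS : Sym2 (Fin n) → Finset (Finset (Fin n)) :=
    fun e => (sepSet f e).toFinite.toFinset with hFS
  set B : Finset (Finset (Fin n)) := Finset.univ.powersetCard 4 with hB
  have hmemE : ∀ s t : Fin n, s(s, t) ∈ E ↔ s ≠ t := by
    intro s t
    rw [hE, Set.Finite.mem_toFinset, SimpleGraph.mem_edgeSet, SimpleGraph.top_adj]
  have hmemFS : ∀ (e : Sym2 (Fin n)) (p : Finset (Fin n)), p ∈ FS e ↔ p ∈ sepSet f e := by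
    intro e p
    rw [hFS]
    exact Set.Finite.mem_toFinset _
  have step1 : ∑ e ∈ E, Sym2.lift
      ⟨fun s t => sepCount f s t, fun s t => sepCount_symm f s t⟩ e
      = ∑ e ∈ E, (FS e).card := by
    refine Finset.sum_congr rfl fun e _ => ?_
    rw [lift_sepCount, hFS]
    exact Set.ncard_eq_toFinset_card _ _
  rw [step1, ← Finset.card_sigma]
  have hmap : ∀ x ∈ E.sigma (fun e => FS e), qmap x ∈ B := by
    rintro ⟨e, p⟩ hx
    rw [Finset.mem_sigma] at hx
    revert hx
    induction e using Sym2.ind with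
    | _ s t =>
      rintro ⟨he, hp⟩
      rw [hmemE] at he
      rw [hmemFS] at hp
      simp only [sepSet, Sym2.lift_mk, Set.mem_setOf_eq] at hp
      obtain ⟨a, b, rfl, hab, hs, ht, -⟩ := hp
      rw [hB, Finset.mem_powersetCard_univ]
      show (qmap ⟨s(s, t), {a, b}⟩).card = 4
      simp only [qmap, Sym2.lift_mk]
      have h1 : t ∉ ({a, b} : Finset (Fin n)) := ht
      have h2 : s ∉ insert t ({a, b} : Finset (Fin n)) := by
        simp only [Finset.mem_insert]
        push_neg
        refine ⟨he, ?_, ?_⟩ <;> · intro hh; exact hs (by simp [hh])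
      rw [Finset.card_insert_of_notMem h2, Finset.card_insert_of_notMem h1,
        Finset.card_pair hab]
  rw [Finset.card_eq_sum_card_fiberwise hmap]
  have key : ∀ Q ∈ B, 2 ≤ ((E.sigma fun e => FS e).filter fun x => qmap x = Q).card := by
    intro Q hQ
    rw [hB, Finset.mem_powersetCard_univ] at hQ
    obtain ⟨a, b, c, d, hab, hac, had, hbc, hbd, hcd, rfl⟩ := card_four hQ
    have hfab : f a ≠ f b := hinj.ne hab
    have hfcd : f c ≠ f d := hinj.ne hcd
    have hfac : f a ≠ f c := hinj.ne hac
    have hfbd : f b ≠ f d := hinj.ne hbd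
    have hfad : f a ≠ f d := hinj.ne had
    have hfbc : f b ≠ f c := hinj.ne hbc
    have nz1 : Dd (f b) (f c) (f d) ≠ 0 := Dd_ne_of_notCollinear (notCol b c d hbc hbd hcd)
    have nz2 : Dd (f a) (f c) (f d) ≠ 0 := Dd_ne_of_notCollinear (notCol a c d hac had hcd)
    have nz3 : Dd (f a) (f b) (f d) ≠ 0 := Dd_ne_of_notCollinear (notCol a b d hab had hbd)
    have nz4 : Dd (f a) (f b) (f c) ≠ 0 := Dd_ne_of_notCollinear (notCol a b c hab hac hbc)
    obtain ⟨i, j, hij, hi, hj⟩ := six nz1 nz2 nz3 nz4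
    set T := (E.sigma fun e => FS e).filter
      (fun x => qmap x = ({a, b, c, d} : Finset (Fin n))) with hT
    have m0 : Dd (f a) (f b) (f d) * Dd (f a) (f b) (f c) < 0 →
        (⟨s(c, d), ({a, b} : Finset (Fin n))⟩ : (_ : Sym2 (Fin n)) × Finset (Fin n)) ∈ T := by
      intro hc0
      rw [hT, Finset.mem_filter, Finset.mem_sigma]
      refine ⟨⟨(hmemE c d).2 hcd, (hmemFS _ _).2 ?_⟩, ?_⟩
      · simp only [sepSet, Sym2.lift_mk, Set.mem_setOf_eq]
        refine ⟨a, b, rfl, hab, ?_, ?_, separates_of hfab ?_⟩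
        · simp [Ne.symm hac, Ne.symm hbc]
        · simp [Ne.symm had, Ne.symm hbd]
        · have e0 : Dd (f a) (f b) (f c) * Dd (f a) (f b) (f d)
              = Dd (f a) (f b) (f d) * Dd (f a) (f b) (f c) := by ring
          rw [e0]; exact hc0
      · exact qeq0 a b c d
    have m1 : Dd (f b) (f c) (f d) * Dd (f a) (f c) (f d) < 0 →
        (⟨s(a, b), ({c, d} : Finset (Fin n))⟩ : (_ : Sym2 (Fin n)) × Finset (Fin n)) ∈ T := by
      intro hc0
      rw [hT, Finset.mem_filter, Finset.mem_sigma]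
      refine ⟨⟨(hmemE a b).2 hab, (hmemFS _ _).2 ?_⟩, ?_⟩
      · simp only [sepSet, Sym2.lift_mk, Set.mem_setOf_eq]
        refine ⟨c, d, rfl, hcd, ?_, ?_, separates_of hfcd ?_⟩
        · simp [hac, had]
        · simp [hbc, hbd]
        · have e0 : Dd (f c) (f d) (f a) * Dd (f c) (f d) (f b)
              = Dd (f b) (f c) (f d) * Dd (f a) (f c) (f d) := by unfold Dd; ring
          rw [e0]; exact hc0
      · exact qeq1 a b c d
    have m2 : 0 < Dd (f a) (f c) (f d) * Dd (f a) (f b) (f c) →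
        (⟨s(b, d), ({a, c} : Finset (Fin n))⟩ : (_ : Sym2 (Fin n)) × Finset (Fin n)) ∈ T := by
      intro hc0
      rw [hT, Finset.mem_filter, Finset.mem_sigma]
      refine ⟨⟨(hmemE b d).2 hbd, (hmemFS _ _).2 ?_⟩, ?_⟩
      · simp only [sepSet, Sym2.lift_mk, Set.mem_setOf_eq]
        refine ⟨a, c, rfl, hac, ?_, ?_, separates_of hfac ?_⟩
        · simp [Ne.symm hab, hbc]
        · simp [Ne.symm had, Ne.symm hcd]
        · have e0 : Dd (f a) (f c) (f b) * Dd (f a) (f c) (f d)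
              = -(Dd (f a) (f c) (f d) * Dd (f a) (f b) (f c)) := by unfold Dd; ring
          rw [e0]; linarith
      · exact qeq2 a b c d
    have m3 : 0 < Dd (f b) (f c) (f d) * Dd (f a) (f b) (f d) →
        (⟨s(a, c), ({b, d} : Finset (Fin n))⟩ : (_ : Sym2 (Fin n)) × Finset (Fin n)) ∈ T := by
      intro hc0
      rw [hT, Finset.mem_filter, Finset.mem_sigma]
      refine ⟨⟨(hmemE a c).2 hac, (hmemFS _ _).2 ?_⟩, ?_⟩
      · simp only [sepSet, Sym2.lift_mk, Set.mem_setOf_eq]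
        refine ⟨b, d, rfl, hbd, ?_, ?_, separates_of hfbd ?_⟩
        · simp [hab, had]
        · simp [Ne.symm hbc, hcd]
        · have e0 : Dd (f b) (f d) (f a) * Dd (f b) (f d) (f c)
              = -(Dd (f b) (f c) (f d) * Dd (f a) (f b) (f d)) := by unfold Dd; ring
          rw [e0]; linarith
      · exact qeq3 a b c d
    have m4 : Dd (f a) (f c) (f d) * Dd (f a) (f b) (f d) < 0 →
        (⟨s(b, c), ({a, d} : Finset (Fin n))⟩ : (_ : Sym2 (Fin n)) × Finset (Fin n)) ∈ T := by
      intro hc0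
      rw [hT, Finset.mem_filter, Finset.mem_sigma]
      refine ⟨⟨(hmemE b c).2 hbc, (hmemFS _ _).2 ?_⟩, ?_⟩
      · simp only [sepSet, Sym2.lift_mk, Set.mem_setOf_eq]
        refine ⟨a, d, rfl, had, ?_, ?_, separates_of hfad ?_⟩
        · simp [Ne.symm hab, hbd]
        · simp [Ne.symm hac, hcd]
        · have e0 : Dd (f a) (f d) (f b) * Dd (f a) (f d) (f c)
              = Dd (f a) (f c) (f d) * Dd (f a) (f b) (f d) := by unfold Dd; ring
          rw [e0]; exact hc0
      · exact qeq4 a b c d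
    have m5 : Dd (f b) (f c) (f d) * Dd (f a) (f b) (f c) < 0 →
        (⟨s(a, d), ({b, c} : Finset (Fin n))⟩ : (_ : Sym2 (Fin n)) × Finset (Fin n)) ∈ T := by
      intro hc0
      rw [hT, Finset.mem_filter, Finset.mem_sigma]
      refine ⟨⟨(hmemE a d).2 had, (hmemFS _ _).2 ?_⟩, ?_⟩
      · simp only [sepSet, Sym2.lift_mk, Set.mem_setOf_eq]
        refine ⟨b, c, rfl, hbc, ?_, ?_, separates_of hfbc ?_⟩
        · simp [hab, hac]
        · simp [Ne.symm hbd, Ne.symm hcd]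
        · have e0 : Dd (f b) (f c) (f a) * Dd (f b) (f c) (f d)
              = Dd (f b) (f c) (f d) * Dd (f a) (f b) (f c) := by unfold Dd; ring
          rw [e0]; exact hc0
      · exact qeq5 a b c d
    have d01 : (⟨s(c, d), ({a, b} : Finset (Fin n))⟩ : (_ : Sym2 (Fin n)) × Finset (Fin n)) ≠ ⟨s(a, b), ({c, d} : Finset (Fin n))⟩ :=
      fun h => pair_ne_l hac had (congrArg Sigma.snd h)
    have d02 : (⟨s(c, d), ({a, b} : Finset (Fin n))⟩ : (_ : Sym2 (Fin n)) × Finset (Fin n)) ≠ ⟨s(b, d), ({a, c} : Finset (Fin n))⟩ :=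
      fun h => pair_ne_r (Ne.symm hab) hbc (congrArg Sigma.snd h)
    have d03 : (⟨s(c, d), ({a, b} : Finset (Fin n))⟩ : (_ : Sym2 (Fin n)) × Finset (Fin n)) ≠ ⟨s(a, c), ({b, d} : Finset (Fin n))⟩ :=
      fun h => pair_ne_l hab had (congrArg Sigma.snd h)
    have d04 : (⟨s(c, d), ({a, b} : Finset (Fin n))⟩ : (_ : Sym2 (Fin n)) × Finset (Fin n)) ≠ ⟨s(b, c), ({a, d} : Finset (Fin n))⟩ :=
      fun h => pair_ne_r (Ne.symm hab) hbd (congrArg Sigma.snd h)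
    have d05 : (⟨s(c, d), ({a, b} : Finset (Fin n))⟩ : (_ : Sym2 (Fin n)) × Finset (Fin n)) ≠ ⟨s(a, d), ({b, c} : Finset (Fin n))⟩ :=
      fun h => pair_ne_l hab hac (congrArg Sigma.snd h)
    have d12 : (⟨s(a, b), ({c, d} : Finset (Fin n))⟩ : (_ : Sym2 (Fin n)) × Finset (Fin n)) ≠ ⟨s(b, d), ({a, c} : Finset (Fin n))⟩ :=
      fun h => pair_ne_r (Ne.symm had) (Ne.symm hcd) (congrArg Sigma.snd h)
    have d13 : (⟨s(a, b), ({c, d} : Finset (Fin n))⟩ : (_ : Sym2 (Fin n)) × Finset (Fin n)) ≠ ⟨s(a, c), ({b, d} : Finset (Fin n))⟩ :=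
      fun h => pair_ne_l (Ne.symm hbc) hcd (congrArg Sigma.snd h)
    have d14 : (⟨s(a, b), ({c, d} : Finset (Fin n))⟩ : (_ : Sym2 (Fin n)) × Finset (Fin n)) ≠ ⟨s(b, c), ({a, d} : Finset (Fin n))⟩ :=
      fun h => pair_ne_l (Ne.symm hac) hcd (congrArg Sigma.snd h)
    have d15 : (⟨s(a, b), ({c, d} : Finset (Fin n))⟩ : (_ : Sym2 (Fin n)) × Finset (Fin n)) ≠ ⟨s(a, d), ({b, c} : Finset (Fin n))⟩ :=
      fun h => pair_ne_r (Ne.symm hbd) (Ne.symm hcd) (congrArg Sigma.snd h)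
    have d23 : (⟨s(b, d), ({a, c} : Finset (Fin n))⟩ : (_ : Sym2 (Fin n)) × Finset (Fin n)) ≠ ⟨s(a, c), ({b, d} : Finset (Fin n))⟩ :=
      fun h => pair_ne_l hab had (congrArg Sigma.snd h)
    have d24 : (⟨s(b, d), ({a, c} : Finset (Fin n))⟩ : (_ : Sym2 (Fin n)) × Finset (Fin n)) ≠ ⟨s(b, c), ({a, d} : Finset (Fin n))⟩ :=
      fun h => pair_ne_r (Ne.symm hac) hcd (congrArg Sigma.snd h)
    have d25 : (⟨s(b, d), ({a, c} : Finset (Fin n))⟩ : (_ : Sym2 (Fin n)) × Finset (Fin n)) ≠ ⟨s(a, d), ({b, c} : Finset (Fin n))⟩ :=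
      fun h => pair_ne_l hab hac (congrArg Sigma.snd h)
    have d34 : (⟨s(a, c), ({b, d} : Finset (Fin n))⟩ : (_ : Sym2 (Fin n)) × Finset (Fin n)) ≠ ⟨s(b, c), ({a, d} : Finset (Fin n))⟩ :=
      fun h => pair_ne_l (Ne.symm hab) hbd (congrArg Sigma.snd h)
    have d35 : (⟨s(a, c), ({b, d} : Finset (Fin n))⟩ : (_ : Sym2 (Fin n)) × Finset (Fin n)) ≠ ⟨s(a, d), ({b, c} : Finset (Fin n))⟩ :=
      fun h => pair_ne_r (Ne.symm hbd) (Ne.symm hcd) (congrArg Sigma.snd h)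
    have d45 : (⟨s(b, c), ({a, d} : Finset (Fin n))⟩ : (_ : Sym2 (Fin n)) × Finset (Fin n)) ≠ ⟨s(a, d), ({b, c} : Finset (Fin n))⟩ :=
      fun h => pair_ne_l hab hac (congrArg Sigma.snd h)
    fin_cases i <;> fin_cases j <;>
      first
      | exact absurd rfl hij
      | exact two_le_card_of (m0 (cnd6_0.1 hi)) (m1 (cnd6_1.1 hj)) d01
      | exact two_le_card_of (m1 (cnd6_1.1 hi)) (m0 (cnd6_0.1 hj)) d01.symm
      | exact two_le_card_of (m0 (cnd6_0.1 hi)) (m2 (cnd6_2.1 hj)) d02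
      | exact two_le_card_of (m2 (cnd6_2.1 hi)) (m0 (cnd6_0.1 hj)) d02.symm
      | exact two_le_card_of (m0 (cnd6_0.1 hi)) (m3 (cnd6_3.1 hj)) d03
      | exact two_le_card_of (m3 (cnd6_3.1 hi)) (m0 (cnd6_0.1 hj)) d03.symm
      | exact two_le_card_of (m0 (cnd6_0.1 hi)) (m4 (cnd6_4.1 hj)) d04
      | exact two_le_card_of (m4 (cnd6_4.1 hi)) (m0 (cnd6_0.1 hj)) d04.symm
      | exact two_le_card_of (m0 (cnd6_0.1 hi)) (m5 (cnd6_5.1 hj)) d05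
      | exact two_le_card_of (m5 (cnd6_5.1 hi)) (m0 (cnd6_0.1 hj)) d05.symm
      | exact two_le_card_of (m1 (cnd6_1.1 hi)) (m2 (cnd6_2.1 hj)) d12
      | exact two_le_card_of (m2 (cnd6_2.1 hi)) (m1 (cnd6_1.1 hj)) d12.symm
      | exact two_le_card_of (m1 (cnd6_1.1 hi)) (m3 (cnd6_3.1 hj)) d13
      | exact two_le_card_of (m3 (cnd6_3.1 hi)) (m1 (cnd6_1.1 hj)) d13.symm
      | exact two_le_card_of (m1 (cnd6_1.1 hi)) (m4 (cnd6_4.1 hj)) d14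
      | exact two_le_card_of (m4 (cnd6_4.1 hi)) (m1 (cnd6_1.1 hj)) d14.symm
      | exact two_le_card_of (m1 (cnd6_1.1 hi)) (m5 (cnd6_5.1 hj)) d15
      | exact two_le_card_of (m5 (cnd6_5.1 hi)) (m1 (cnd6_1.1 hj)) d15.symm
      | exact two_le_card_of (m2 (cnd6_2.1 hi)) (m3 (cnd6_3.1 hj)) d23
      | exact two_le_card_of (m3 (cnd6_3.1 hi)) (m2 (cnd6_2.1 hj)) d23.symm
      | exact two_le_card_of (m2 (cnd6_2.1 hi)) (m4 (cnd6_4.1 hj)) d24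
      | exact two_le_card_of (m4 (cnd6_4.1 hi)) (m2 (cnd6_2.1 hj)) d24.symm
      | exact two_le_card_of (m2 (cnd6_2.1 hi)) (m5 (cnd6_5.1 hj)) d25
      | exact two_le_card_of (m5 (cnd6_5.1 hi)) (m2 (cnd6_2.1 hj)) d25.symm
      | exact two_le_card_of (m3 (cnd6_3.1 hi)) (m4 (cnd6_4.1 hj)) d34
      | exact two_le_card_of (m4 (cnd6_4.1 hi)) (m3 (cnd6_3.1 hj)) d34.symm
      | exact two_le_card_of (m3 (cnd6_3.1 hi)) (m5 (cnd6_5.1 hj)) d35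
      | exact two_le_card_of (m5 (cnd6_5.1 hi)) (m3 (cnd6_3.1 hj)) d35.symm
      | exact two_le_card_of (m4 (cnd6_4.1 hi)) (m5 (cnd6_5.1 hj)) d45
      | exact two_le_card_of (m5 (cnd6_5.1 hi)) (m4 (cnd6_4.1 hj)) d45.symm
  calc 2 * Nat.choose n 4 = ∑ _Q ∈ B, 2 := by
        rw [Finset.sum_const, hB, Finset.card_powersetCard, Finset.card_univ,
          Fintype.card_fin, smul_eq_mul, mul_comm]
    _ ≤ ∑ Q ∈ B, ((E.sigma fun e => FS e).filter fun x => qmap x = Q).card :=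
        Finset.sum_le_sum key
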